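/- arXiv:2410.24193 — 2 statements merged into one kernel-verified Lean document; each statement's English description precedes it below -/
import Mathlib

section
/- Let X be a finitely generated torsion module over Λ = O⟦T⟧ with characteristic power series F ∈ Λ, and assume X has no nonzero finite Λ-submodules. If X^Γ := X[T] is finite, then X/TX is finite and #(X/TX) = #(O/F(0)) · #(X[T]). -/
open Submodule PowerSeries

section Toolkit
variable {R M : Type*} [CommRing R] [AddCommGroup M] [Module R M]

theorem aux_card_quot_mul (N : Submodule R M) : Nat.card M = Nat.card (M ⧸ N) * Nat.card N :=
  AddSubgroup.card_eq_card_quotient_mul_card_addSubgroup N.toAddSubgroup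

theorem aux_fin_of_fin_quot_fin (N : Submodule R M) (h1 : Finite (M ⧸ N)) (h2 : Finite N) :
    Finite M := by
  have : Finite (M ⧸ N.toAddSubgroup) := h1
  have : Finite N.toAddSubgroup := h2
  exact Finite.of_equiv _ (AddSubgroup.addGroupEquivQuotientProdAddSubgroup (s := N.toAddSubgroup)).symm

theorem aux_mem_ideal_smul_iff (r : R) (N : Submodule R M) (x : M) :
    x ∈ Ideal.span {r} • N ↔ ∃ y ∈ N, r • y = x := by
  rw [Submodule.ideal_span_singleton_smul]
  constructor
  · intro h
    obtain ⟨y, hy, hxy⟩ := Set.mem_smul_set.mp h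
    exact ⟨y, hy, hxy⟩
  · rintro ⟨y, hy, rfl⟩
    exact Submodule.smul_mem_pointwise_smul y r N hy

theorem aux_ideal_smul_top_eq_range (r : R) :
    Ideal.span {r} • (⊤ : Submodule R M) = LinearMap.range (LinearMap.lsmul R M r) := by
  ext x
  rw [aux_mem_ideal_smul_iff, LinearMap.mem_range]
  exact ⟨fun ⟨y, _, h⟩ => ⟨y, h⟩, fun ⟨y, h⟩ => ⟨y, trivial, h⟩⟩

theorem aux_core_count (r : R) (N : Submodule R M)
    (hinj : ∀ e : M, r • e = 0 → e = 0)
    (hZfin : Finite (M ⧸ N))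
    (hEfin : Finite (M ⧸ (Ideal.span {r} • (⊤ : Submodule R M)))) :
    Finite (M ⧸ (Ideal.span {r} • N)) ∧
      Nat.card (N.map (Ideal.span {r} • N).mkQ) =
        Nat.card (M ⧸ (Ideal.span {r} • (⊤ : Submodule R M))) := by
  haveI := hZfin
  haveI : Finite (M ⧸ (Ideal.span {r} • (⊤ : Submodule R M))) := hEfin
  set TM : Submodule R M := Ideal.span {r} • N with hTM
  set TE : Submodule R M := Ideal.span {r} • (⊤ : Submodule R M) with hTE
  have hTM_le_N : TM ≤ N := Submodule.smul_le_right
  have hTM_le_TE : TM ≤ TE := Submodule.smul_mono le_rfl le_top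
  set ℓt : M →ₗ[R] (M ⧸ TM) := TM.mkQ.comp (LinearMap.lsmul R M r) with hℓt
  have hker : LinearMap.ker ℓt = N := by
    ext e
    simp only [hℓt, LinearMap.mem_ker, LinearMap.comp_apply, LinearMap.lsmul_apply,
      Submodule.mkQ_apply, Submodule.Quotient.mk_eq_zero]
    constructor
    · intro he
      obtain ⟨y, hy, hye⟩ := (aux_mem_ideal_smul_iff r N _).mp he
      have h0 : r • (e - y) = 0 := by rw [smul_sub, hye, sub_self]
      have h1 : e = y := by
        have h2 := hinj _ h0
        rwa [sub_eq_zero] at h2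
      rwa [h1]
    · intro he
      exact Submodule.smul_mem_smul (Ideal.subset_span rfl) he
  have hrange : LinearMap.range ℓt = TE.map TM.mkQ := by
    rw [hℓt, LinearMap.range_comp, ← aux_ideal_smul_top_eq_range]
  have eT : (M ⧸ N) ≃ (TE.map TM.mkQ) :=
    ((Submodule.quotEquivOfEq _ _ hker.symm).trans ℓt.quotKerEquivRange).toEquiv.trans
      (Equiv.cast (by rw [hrange]))
  have eQT : ((M ⧸ TM) ⧸ (TE.map TM.mkQ)) ≃ₗ[R] (M ⧸ TE) :=
    Submodule.quotientQuotientEquivQuotient TM TE hTM_le_TE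
  have eQM : ((M ⧸ TM) ⧸ (N.map TM.mkQ)) ≃ₗ[R] (M ⧸ N) :=
    Submodule.quotientQuotientEquivQuotient TM N hTM_le_N
  have finT : Finite (TE.map TM.mkQ) := Finite.of_equiv _ eT
  have finQT : Finite ((M ⧸ TM) ⧸ (TE.map TM.mkQ)) := Finite.of_equiv _ eQT.symm.toEquiv
  have finQ : Finite (M ⧸ TM) := aux_fin_of_fin_quot_fin _ finQT finT
  refine ⟨finQ, ?_⟩
  have h1 : Nat.card (M ⧸ TM) = Nat.card (M ⧸ N) * Nat.card (N.map TM.mkQ) := by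
    rw [aux_card_quot_mul (N.map TM.mkQ), Nat.card_congr eQM.toEquiv]
  have h2 : Nat.card (M ⧸ TM) = Nat.card (M ⧸ TE) * Nat.card (M ⧸ N) := by
    rw [aux_card_quot_mul (TE.map TM.mkQ), Nat.card_congr eQT.toEquiv, Nat.card_congr eT.symm]
  have hz : Nat.card (M ⧸ N) ≠ 0 := Nat.card_ne_zero.mpr ⟨⟨0⟩, hZfin⟩
  have h3 := h1.symm.trans h2
  rw [mul_comm (Nat.card (M ⧸ TE))] at h3
  exact Nat.eq_of_mul_eq_mul_left (Nat.pos_of_ne_zero hz) h3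

theorem aux_smul_top_quot (I : Ideal R) (r : R) :
    (Ideal.span {r} • (⊤ : Submodule R (R ⧸ I))) = Submodule.map I.mkQ (I ⊔ Ideal.span {r}) := by
  rw [Submodule.map_sup, Submodule.mkQ_map_self, bot_sup_eq,
    ← (Submodule.map_top I.mkQ ▸ Submodule.range_mkQ I : Submodule.map I.mkQ ⊤ = ⊤),
    ← Submodule.map_smul'']
  congr 1
  rw [smul_eq_mul, Ideal.mul_top]

noncomputable def auxQuotSmulTopEquiv (I : Ideal R) (r : R) :
    ((R ⧸ I) ⧸ (Ideal.span {r} • (⊤ : Submodule R (R ⧸ I)))) ≃ₗ[R] R ⧸ (I ⊔ Ideal.span {r}) :=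
  (Submodule.quotEquivOfEq _ _ (aux_smul_top_quot I r)).trans
    (Submodule.quotientQuotientEquivQuotient I (I ⊔ Ideal.span {r}) le_sup_left)
end Toolkit

section Pi
variable {R : Type*} [CommRing R] {ι : Type*} [Fintype ι] [DecidableEq ι]
  {M : ι → Type*} [∀ i, AddCommGroup (M i)] [∀ i, Module R (M i)]

theorem aux_smul_top_pi (r : R) :
    (Ideal.span {r} • (⊤ : Submodule R (∀ i, M i))) =
      Submodule.pi Set.univ (fun i => Ideal.span {r} • (⊤ : Submodule R (M i))) := by
  ext x
  simp only [Submodule.mem_pi, Set.mem_univ, forall_true_left]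
  rw [aux_mem_ideal_smul_iff]
  constructor
  · rintro ⟨y, -, rfl⟩ i
    exact (aux_mem_ideal_smul_iff r ⊤ _).mpr ⟨y i, trivial, rfl⟩
  · intro hx
    have hx' := fun i => (aux_mem_ideal_smul_iff r ⊤ (x i)).mp (hx i)
    choose y hy using hx'
    exact ⟨fun i => y i, trivial, funext fun i => (hy i).2⟩

noncomputable def auxQuotSmulTopPiEquiv (r : R) :
    ((∀ i, M i) ⧸ (Ideal.span {r} • (⊤ : Submodule R (∀ i, M i)))) ≃ₗ[R]
      ∀ i, (M i ⧸ (Ideal.span {r} • (⊤ : Submodule R (M i)))) :=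
  (Submodule.quotEquivOfEq _ _ (aux_smul_top_pi r)).trans (Submodule.quotientPi _)
end Pi

section PS
variable {O : Type*} [CommRing O]

theorem aux_ker_constCoeff_comp (f : PowerSeries O) :
    RingHom.ker ((Ideal.Quotient.mk (Ideal.span {constantCoeff (R := O) f})).comp (constantCoeff (R := O))) =
      Ideal.span {f} ⊔ Ideal.span {(X : PowerSeries O)} := by
  ext x
  simp only [RingHom.mem_ker, RingHom.comp_apply, Ideal.Quotient.eq_zero_iff_mem,
    Ideal.mem_span_singleton]
  constructor
  · intro hx
    obtain ⟨c, hc⟩ := hx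
    have hX : (X : PowerSeries O) ∣ (x - C (R := O) c * f) := by
      rw [PowerSeries.X_dvd_iff, map_sub, map_mul, PowerSeries.constantCoeff_C, hc]
      ring
    have hx2 : x = C (R := O) c * f + (x - C (R := O) c * f) := by ring
    rw [hx2]
    exact Submodule.add_mem_sup (Ideal.mem_span_singleton.mpr ⟨C (R := O) c, mul_comm _ _⟩)
      (Ideal.mem_span_singleton.mpr hX)
  · intro hx
    obtain ⟨u, hu, v, hv, rfl⟩ := Submodule.mem_sup.mp hx
    obtain ⟨c, rfl⟩ := Ideal.mem_span_singleton.mp hu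
    obtain ⟨d, rfl⟩ := Ideal.mem_span_singleton.mp hv
    rw [map_add, map_mul, map_mul, PowerSeries.constantCoeff_X]
    exact ⟨constantCoeff (R := O) c, by ring⟩

noncomputable def auxQuotSupEquiv (f : PowerSeries O) :
    (PowerSeries O ⧸ (Ideal.span {f} ⊔ Ideal.span {(X : PowerSeries O)})) ≃+*
      O ⧸ Ideal.span {constantCoeff (R := O) f} := by
  rw [← aux_ker_constCoeff_comp f]
  exact RingHom.quotientKerEquivOfSurjective
    (fun y => by
      obtain ⟨c, rfl⟩ := Ideal.Quotient.mk_surjective y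
      exact ⟨C (R := O) c, by simp⟩)
end PS

section DVR
variable {O : Type*} [CommRing O] [IsDomain O] [IsDiscreteValuationRing O]
  [Finite (IsLocalRing.ResidueField O)]

theorem aux_range_lsmul_ring (r : O) :
    LinearMap.range (LinearMap.lsmul O O r) = Ideal.span {r} := by
  ext x
  simp only [LinearMap.mem_range, LinearMap.lsmul_apply, smul_eq_mul, Ideal.mem_span_singleton']
  exact ⟨fun ⟨c, hc⟩ => ⟨c, by rw [← hc, mul_comm]⟩, fun ⟨c, hc⟩ => ⟨c, by rw [← hc, mul_comm]⟩⟩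

theorem aux_surj_mapQ {M : Type*} [AddCommGroup M] [Module O M] {p q : Submodule O M} (h : p ≤ q) :
    Function.Surjective ⇑(Submodule.mapQ p q LinearMap.id h) := by
  intro x
  obtain ⟨y, rfl⟩ := Submodule.mkQ_surjective q x
  exact ⟨Submodule.Quotient.mk y, rfl⟩

theorem aux_fin_quot_pow (π : O) (hπ : Irreducible π) (n : ℕ) :
    Finite (O ⧸ Ideal.span {π ^ n}) := by
  induction n with
  | zero =>
    rw [pow_zero, Ideal.span_singleton_one]
    exact Finite.of_subsingleton
  | succ n ih =>
    have hle : Ideal.span {π ^ (n+1)} ≤ Ideal.span {π ^ n} :=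
      Ideal.span_singleton_le_span_singleton.mpr ⟨π, pow_succ π n⟩
    set S : Submodule O O := Ideal.span {π ^ (n+1)} with hS
    set T : Submodule O O := Ideal.span {π ^ n} with hT
    have finq : Finite ((O ⧸ S) ⧸ T.map S.mkQ) :=
      Finite.of_equiv _ (Submodule.quotientQuotientEquivQuotient S T hle).symm.toEquiv
    refine aux_fin_of_fin_quot_fin (T.map S.mkQ) finq ?_
    set ℓ : O →ₗ[O] O ⧸ S := S.mkQ.comp (LinearMap.lsmul O O (π ^ n)) with hℓ
    have hrange : LinearMap.range ℓ = T.map S.mkQ := by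
      rw [hℓ, LinearMap.range_comp, aux_range_lsmul_ring, hT]
    have hker : Ideal.span {π} ≤ LinearMap.ker ℓ := by
      rw [Ideal.span_singleton_le_iff_mem]
      simp only [LinearMap.mem_ker, hℓ, LinearMap.comp_apply, LinearMap.lsmul_apply,
        smul_eq_mul, Submodule.mkQ_apply]
      rw [Submodule.Quotient.mk_eq_zero, hS]
      exact Ideal.mem_span_singleton'.mpr ⟨1, by ring⟩
    have h1 : Finite (O ⧸ Ideal.span {π}) := by
      rw [← hπ.maximalIdeal_eq]
      exact ‹Finite (IsLocalRing.ResidueField O)›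
    have h2 : Finite (O ⧸ LinearMap.ker ℓ) := Finite.of_surjective _ (aux_surj_mapQ hker)
    have h3 : Finite (LinearMap.range ℓ) := Finite.of_equiv _ ℓ.quotKerEquivRange.toEquiv
    rw [← hrange]
    exact h3

theorem aux_fin_quot_ne_zero {a : O} (ha : a ≠ 0) : Finite (O ⧸ Ideal.span {a}) := by
  obtain ⟨π, hπ⟩ := IsDiscreteValuationRing.exists_irreducible O
  obtain ⟨n, hn⟩ := IsDiscreteValuationRing.associated_pow_irreducible ha hπ
  rw [show Ideal.span {a} = Ideal.span {π ^ n} from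
    Ideal.span_singleton_eq_span_singleton.mpr hn]
  exact aux_fin_quot_pow π hπ n

theorem aux_card_quot_mul_of_ne_zero {a : O} (b : O) (ha : a ≠ 0) :
    Nat.card (O ⧸ Ideal.span {a * b}) =
      Nat.card (O ⧸ Ideal.span {a}) * Nat.card (O ⧸ Ideal.span {b}) := by
  have hle : Ideal.span {a * b} ≤ Ideal.span {a} :=
    Ideal.span_singleton_le_span_singleton.mpr ⟨b, rfl⟩
  set S : Submodule O O := Ideal.span {a * b} with hS
  set T : Submodule O O := Ideal.span {a} with hT
  have e1 := Submodule.quotientQuotientEquivQuotient S T hle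
  set ℓ : O →ₗ[O] O ⧸ S := S.mkQ.comp (LinearMap.lsmul O O a) with hℓ
  have hrange : LinearMap.range ℓ = T.map S.mkQ := by
    rw [hℓ, LinearMap.range_comp, aux_range_lsmul_ring, hT]
  have hker : LinearMap.ker ℓ = Ideal.span {b} := by
    ext x
    simp only [LinearMap.mem_ker, hℓ, LinearMap.comp_apply, LinearMap.lsmul_apply,
      smul_eq_mul, Submodule.mkQ_apply, Submodule.Quotient.mk_eq_zero, hS,
      Ideal.mem_span_singleton]
    exact mul_dvd_mul_iff_left ha
  have e2 : (O ⧸ Ideal.span {b}) ≃ (T.map S.mkQ) := by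
    rw [← hker, ← hrange]; exact ℓ.quotKerEquivRange.toEquiv
  calc Nat.card (O ⧸ S)
      = Nat.card ((O ⧸ S) ⧸ T.map S.mkQ) * Nat.card (T.map S.mkQ) :=
        AddSubgroup.card_eq_card_quotient_mul_card_addSubgroup _
    _ = Nat.card (O ⧸ T) * Nat.card (O ⧸ Ideal.span {b}) := by
        rw [Nat.card_congr e1.toEquiv, Nat.card_congr e2.symm]

theorem aux_card_quot_prod {ι : Type*} (s : Finset ι) (a : ι → O) (h : ∀ i ∈ s, a i ≠ 0) :
    Nat.card (O ⧸ Ideal.span {∏ i ∈ s, a i}) = ∏ i ∈ s, Nat.card (O ⧸ Ideal.span {a i}) := by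
  classical
  induction s using Finset.induction_on with
  | empty => simp [Ideal.span_singleton_one]
  | insert i s hx ih =>
    rw [Finset.prod_insert hx, Finset.prod_insert hx,
      aux_card_quot_mul_of_ne_zero _ (h i (Finset.mem_insert_self i s)),
      ih (fun j hj => h j (Finset.mem_insert_of_mem hj))]

theorem aux_infinite_O : Infinite O := by
  by_contra h
  rw [not_infinite_iff_finite] at h
  exact IsDiscreteValuationRing.not_isField O (Finite.isField_of_domain O)

theorem aux_infinite_Lambda : Infinite (PowerSeries O) := by
  have := aux_infinite_O (O := O)
  exact Infinite.of_injective (C (R := O)) PowerSeries.C_injective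

theorem aux_comp_torsionfree (f : PowerSeries O) (hf0 : constantCoeff (R := O) f ≠ 0)
    (z : PowerSeries O ⧸ Ideal.span {f}) (hz : (X : PowerSeries O) • z = 0) : z = 0 := by
  obtain ⟨w, rfl⟩ := Submodule.Quotient.mk_surjective _ z
  have hmk : (X : PowerSeries O) • (Submodule.Quotient.mk w : PowerSeries O ⧸ Ideal.span {f})
      = Submodule.Quotient.mk (X * w) := by
    rw [← Submodule.Quotient.mk_smul]; rfl
  rw [hmk, Submodule.Quotient.mk_eq_zero] at hz
  obtain ⟨h, hh⟩ := Ideal.mem_span_singleton.mp hz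
  have hh0 : constantCoeff (R := O) h = 0 := by
    have hc := congrArg (constantCoeff (R := O)) hh
    simp only [map_mul, constantCoeff_X, zero_mul] at hc
    rcases mul_eq_zero.mp hc.symm with h1 | h1
    · exact absurd h1 hf0
    · exact h1
  obtain ⟨h', rfl⟩ := PowerSeries.X_dvd_iff.mpr hh0
  have hw : w = f * h' := by
    apply mul_left_cancel₀ (PowerSeries.X_ne_zero : (X : PowerSeries O) ≠ 0)
    rw [hh]; ring
  rw [Submodule.Quotient.mk_eq_zero]
  exact Ideal.mem_span_singleton.mpr ⟨h', hw⟩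
end DVR



/-- Characteristic-ideal predicate over `Λ = O⟦T⟧` (pseudo-isomorphism onto an elementary
module, with pseudo-null = finite). -/
def IsCharIdeal (O : Type*) [CommRing O] (X : Type*) [AddCommGroup X]
    [Module (PowerSeries O) X] (I : Ideal (PowerSeries O)) : Prop :=
  ∃ (n : ℕ) (f : Fin n → PowerSeries O)
    (φ : X →ₗ[PowerSeries O] ((i : Fin n) → PowerSeries O ⧸ Ideal.span {f i})),
      Finite (LinearMap.ker φ) ∧
      Finite (((i : Fin n) → PowerSeries O ⧸ Ideal.span {f i}) ⧸ LinearMap.range φ) ∧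
      I = Ideal.span {∏ i, f i}

set_option maxHeartbeats 1600000 in
set_option synthInstance.maxHeartbeats 400000 in
/-- Let `X` be a finitely generated torsion module over `Λ = O⟦T⟧` with
characteristic power series `F ∈ Λ`, having no nonzero finite `Λ`-submodule.  If
`X^Γ = X[T]` is finite, then `X_Γ = X/TX` is finite and
`#(X/TX) = #(O/F(0)) · #(X[T])`. -/
theorem statement13 {O : Type*} [CommRing O] [IsDomain O] [IsDiscreteValuationRing O]
    [Finite (IsLocalRing.ResidueField O)]
    {X : Type*} [AddCommGroup X] [Module (PowerSeries O) X]
    [Module.Finite (PowerSeries O) X]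
    (hXtors : Module.IsTorsion (PowerSeries O) X)
    (hnofin : ∀ N : Submodule (PowerSeries O) X, Finite N → N = ⊥)
    (F : PowerSeries O) (hF : IsCharIdeal O X (Ideal.span {F}))
    (hfin : Finite (LinearMap.ker
      (LinearMap.lsmul (PowerSeries O) X (PowerSeries.X : PowerSeries O)))) :
    Finite (X ⧸ ((Ideal.span {(PowerSeries.X : PowerSeries O)}) •
        (⊤ : Submodule (PowerSeries O) X))) ∧
      Nat.card (X ⧸ ((Ideal.span {(PowerSeries.X : PowerSeries O)}) •
          (⊤ : Submodule (PowerSeries O) X))) =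
        Nat.card (O ⧸ Ideal.span {PowerSeries.constantCoeff (R := O) F}) *
          Nat.card (LinearMap.ker
            (LinearMap.lsmul (PowerSeries O) X (PowerSeries.X : PowerSeries O))) := by
    classical
  obtain ⟨n, f, φ, hkerfin, hcokfin, hFspan⟩ := hF
  have hkerbot : LinearMap.ker φ = ⊥ := hnofin _ hkerfin
  have φinj : Function.Injective φ := LinearMap.ker_eq_bot.mp hkerbot
  have hXTbot : LinearMap.ker
      (LinearMap.lsmul (PowerSeries O) X (PowerSeries.X : PowerSeries O)) = ⊥ := hnofin _ hfin
  have hXT : ∀ x : X, (PowerSeries.X : PowerSeries O) • x = 0 → x = 0 := by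
    intro x hx
    have hm : x ∈ LinearMap.ker
        (LinearMap.lsmul (PowerSeries O) X (PowerSeries.X : PowerSeries O)) := hx
    rw [hXTbot, Submodule.mem_bot] at hm
    exact hm
  set M : Submodule (PowerSeries O) _ := LinearMap.range φ with hM
  haveI := hcokfin
  -- constant coefficients are nonzero
  have hf0 : ∀ i, PowerSeries.constantCoeff (R := O) (f i) ≠ 0 := by
    intro i h0
    obtain ⟨g, hg⟩ := PowerSeries.X_dvd_iff.mpr h0
    by_cases hfi : f i = 0
    · -- the i-th component of M is zero since X is torsion
      have hMle : M ≤ LinearMap.ker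
          (LinearMap.proj i :
            ((j : Fin n) → PowerSeries O ⧸ Ideal.span {f j}) →ₗ[PowerSeries O] _) := by
        rintro _ ⟨x, rfl⟩
        obtain ⟨a, ha⟩ := @hXtors x
        have h1 : (a : PowerSeries O) • (φ x) i = 0 := by
          have h2 : (a : PowerSeries O) • φ x = 0 := by
            rw [← map_smul]
            have : (a : PowerSeries O) • x = a • x := rfl
            rw [this, ha, map_zero]
          calc (a : PowerSeries O) • (φ x) i = ((a : PowerSeries O) • φ x) i := rfl
            _ = 0 := by rw [h2]; rfl
        obtain ⟨w, hw⟩ := Submodule.Quotient.mk_surjective _ ((φ x) i)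
        rw [LinearMap.mem_ker]
        show (φ x) i = 0
        rw [← hw] at h1 ⊢
        rw [← Submodule.Quotient.mk_smul, Submodule.Quotient.mk_eq_zero, hfi,
          Ideal.span_singleton_eq_bot.mpr rfl, Submodule.mem_bot, smul_eq_mul] at h1
        have hw0 : w = 0 := (mul_eq_zero.mp h1).resolve_left (nonZeroDivisors.coe_ne_zero a)
        rw [hw0, Submodule.Quotient.mk_eq_zero]
        exact Submodule.zero_mem _
      have hsurj : Function.Surjective
          (Submodule.liftQ M (LinearMap.proj i) hMle) := by
        intro y
        refine ⟨Submodule.Quotient.mk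
          (Pi.single (M := fun j : Fin n => PowerSeries O ⧸ Ideal.span {f j}) i y), ?_⟩
        rw [Submodule.liftQ_apply]
        exact Pi.single_eq_same (M := fun j : Fin n => PowerSeries O ⧸ Ideal.span {f j}) i y
      haveI hfinc : Finite (PowerSeries O ⧸ Ideal.span {f i}) := Finite.of_surjective _ hsurj
      have hfinL : Finite (PowerSeries O) := by
        have e := Submodule.quotEquivOfEqBot
          (p := (Ideal.span {f i} : Submodule (PowerSeries O) (PowerSeries O)))
          (by rw [hfi]; exact Ideal.span_singleton_eq_bot.mpr rfl)
        exact Finite.of_equiv _ e.toEquiv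
      haveI := hfinL
      haveI := aux_infinite_Lambda (O := O)
      exact not_finite (PowerSeries O)
    · have hgne : g ≠ 0 := fun h => hfi (by rw [hg, h, mul_zero])
      set θ : O → (((j : Fin n) → PowerSeries O ⧸ Ideal.span {f j}) ⧸ M) := fun c =>
        Submodule.Quotient.mk
          (Pi.single i (Submodule.Quotient.mk (PowerSeries.C (R := O) c * g))) with hθ
      have hθinj : Function.Injective θ := by
        intro c₁ c₂ hc
        have hdiff := (Submodule.Quotient.eq M).mp hc
        have hsingle :
            (Pi.single i (Submodule.Quotient.mk (PowerSeries.C (R := O) c₁ * g)) :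
              (j : Fin n) → PowerSeries O ⧸ Ideal.span {f j})
            - Pi.single i (Submodule.Quotient.mk (PowerSeries.C (R := O) c₂ * g))
            = Pi.single i (Submodule.Quotient.mk (PowerSeries.C (R := O) (c₁ - c₂) * g)) := by
          rw [← Pi.single_sub]
          congr 1
          rw [← Submodule.Quotient.mk_sub]
          congr 1
          rw [map_sub, sub_mul]
        rw [hsingle] at hdiff
        obtain ⟨x, hx⟩ := hdiff
        have hTx : (PowerSeries.X : PowerSeries O) • φ x = 0 := by
          rw [hx, ← Pi.single_smul]
          have : (PowerSeries.X : PowerSeries O) •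
              (Submodule.Quotient.mk (PowerSeries.C (R := O) (c₁ - c₂) * g) :
                PowerSeries O ⧸ Ideal.span {f i}) = 0 := by
            rw [← Submodule.Quotient.mk_smul, Submodule.Quotient.mk_eq_zero]
            refine Ideal.mem_span_singleton.mpr ⟨PowerSeries.C (R := O) (c₁ - c₂), ?_⟩
            rw [smul_eq_mul, hg]; ring
          rw [this, Pi.single_zero]
        rw [← map_smul] at hTx
        have hx0 : x = 0 := hXT x (φinj (by rw [hTx, map_zero]))
        rw [hx0, map_zero] at hx
        have hcomp := congrFun hx.symm i
        rw [Pi.single_eq_same] at hcomp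
        have : (0 : ((j : Fin n) → PowerSeries O ⧸ Ideal.span {f j})) i = 0 := rfl
        rw [this, Submodule.Quotient.mk_eq_zero] at hcomp
        obtain ⟨k, hk⟩ := Ideal.mem_span_singleton.mp hcomp
        have hck : PowerSeries.C (R := O) (c₁ - c₂) = PowerSeries.X * k := by
          apply mul_right_cancel₀ hgne
          rw [hk, hg]; ring
        have hc0 := congrArg (PowerSeries.constantCoeff (R := O)) hck
        simp only [map_mul, PowerSeries.constantCoeff_C, PowerSeries.constantCoeff_X,
          zero_mul] at hc0
        exact sub_eq_zero.mp hc0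
      haveI : Finite O := Finite.of_injective θ hθinj
      haveI := aux_infinite_O (O := O)
      exact not_finite O
  -- X acts injectively on E
  have hEinj : ∀ e : ((j : Fin n) → PowerSeries O ⧸ Ideal.span {f j}),
      (PowerSeries.X : PowerSeries O) • e = 0 → e = 0 := by
    intro e he
    funext i
    have h1 : (PowerSeries.X : PowerSeries O) • e i = 0 := by
      calc (PowerSeries.X : PowerSeries O) • e i
          = ((PowerSeries.X : PowerSeries O) • e) i := rfl
        _ = 0 := by rw [he]; rfl
    exact aux_comp_torsionfree (f i) (hf0 i) (e i) h1
  -- identify E ⧸ TE with the product of O ⧸ (f i)(0)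
  have e2 : ∀ i : Fin n, ((PowerSeries O ⧸ Ideal.span {f i}) ⧸
        (Ideal.span {(PowerSeries.X : PowerSeries O)} •
          (⊤ : Submodule (PowerSeries O) (PowerSeries O ⧸ Ideal.span {f i})))) ≃
      (O ⧸ Ideal.span {PowerSeries.constantCoeff (R := O) (f i)}) := fun i =>
    (auxQuotSmulTopEquiv (Ideal.span {f i}) (PowerSeries.X : PowerSeries O)).toEquiv.trans
      (auxQuotSupEquiv (f i)).toEquiv
  have eE : (((j : Fin n) → PowerSeries O ⧸ Ideal.span {f j}) ⧸
        (Ideal.span {(PowerSeries.X : PowerSeries O)} • ⊤)) ≃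
      ((i : Fin n) → O ⧸ Ideal.span {PowerSeries.constantCoeff (R := O) (f i)}) :=
    (auxQuotSmulTopPiEquiv (M := fun j : Fin n => PowerSeries O ⧸ Ideal.span {f j})
        (PowerSeries.X : PowerSeries O)).toEquiv.trans
      (Equiv.piCongrRight e2)
  haveI hfinComp : ∀ i, Finite (O ⧸ Ideal.span {PowerSeries.constantCoeff (R := O) (f i)}) :=
    fun i => aux_fin_quot_ne_zero (hf0 i)
  haveI hEfin : Finite (((j : Fin n) → PowerSeries O ⧸ Ideal.span {f j}) ⧸
      (Ideal.span {(PowerSeries.X : PowerSeries O)} • ⊤)) := Finite.of_equiv _ eE.symm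
  obtain ⟨finQ, cardEq⟩ :=
    aux_core_count (PowerSeries.X : PowerSeries O) M hEinj hcokfin hEfin
  haveI := finQ
  -- transfer to X
  set TM := Ideal.span {(PowerSeries.X : PowerSeries O)} • M with hTM
  set w : X →ₗ[PowerSeries O] _ := TM.mkQ.comp φ with hw
  have hwker : LinearMap.ker w =
      Ideal.span {(PowerSeries.X : PowerSeries O)} • (⊤ : Submodule (PowerSeries O) X) := by
    ext x
    rw [LinearMap.mem_ker, aux_mem_ideal_smul_iff]
    simp only [hw, LinearMap.comp_apply, Submodule.mkQ_apply, Submodule.Quotient.mk_eq_zero]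
    constructor
    · intro hx
      obtain ⟨m, hm, hmx⟩ := (aux_mem_ideal_smul_iff _ M _).mp hx
      obtain ⟨y, rfl⟩ := hm
      refine ⟨y, trivial, ?_⟩
      apply φinj
      rw [map_smul, hmx]
    · rintro ⟨y, -, rfl⟩
      rw [map_smul]
      exact Submodule.smul_mem_smul (Ideal.subset_span rfl) ⟨y, rfl⟩
  have hwrange : LinearMap.range w = M.map TM.mkQ := by
    rw [hw, LinearMap.range_comp]
  have eX : (X ⧸ Ideal.span {(PowerSeries.X : PowerSeries O)} •
        (⊤ : Submodule (PowerSeries O) X)) ≃ (M.map TM.mkQ) :=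
    ((Submodule.quotEquivOfEq _ _ hwker.symm).trans w.quotKerEquivRange).toEquiv.trans
      (Equiv.cast (by rw [hwrange]))
  haveI : Finite (M.map TM.mkQ) := Subtype.finite
  refine ⟨Finite.of_equiv _ eX.symm, ?_⟩
  have hcard1 : Nat.card (LinearMap.ker
      (LinearMap.lsmul (PowerSeries O) X (PowerSeries.X : PowerSeries O))) = 1 := by
    rw [hXTbot]
    exact Nat.card_unique
  rw [hcard1, mul_one]
  have hFassoc : Associated F (∏ i, f i) := Ideal.span_singleton_eq_span_singleton.mp hFspan
  have h0assoc : Associated (PowerSeries.constantCoeff (R := O) F)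
      (∏ i, PowerSeries.constantCoeff (R := O) (f i)) := by
    have h := hFassoc.map (PowerSeries.constantCoeff (R := O)).toMonoidHom
    simpa [map_prod] using h
  have hspan0 : Ideal.span {PowerSeries.constantCoeff (R := O) F} =
      Ideal.span {∏ i, PowerSeries.constantCoeff (R := O) (f i)} :=
    Ideal.span_singleton_eq_span_singleton.mpr h0assoc
  calc Nat.card (X ⧸ Ideal.span {(PowerSeries.X : PowerSeries O)} •
        (⊤ : Submodule (PowerSeries O) X))
      = Nat.card (M.map TM.mkQ) := Nat.card_congr eX
    _ = Nat.card ((((j : Fin n) → PowerSeries O ⧸ Ideal.span {f j}) ⧸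
        (Ideal.span {(PowerSeries.X : PowerSeries O)} • ⊤))) := cardEq
    _ = Nat.card ((i : Fin n) → O ⧸ Ideal.span {PowerSeries.constantCoeff (R := O) (f i)}) :=
        Nat.card_congr eE
    _ = ∏ i, Nat.card (O ⧸ Ideal.span {PowerSeries.constantCoeff (R := O) (f i)}) := Nat.card_pi
    _ = Nat.card (O ⧸ Ideal.span {∏ i, PowerSeries.constantCoeff (R := O) (f i)}) :=
        (aux_card_quot_prod Finset.univ _ (fun i _ => hf0 i)).symm
    _ = Nat.card (O ⧸ Ideal.span {PowerSeries.constantCoeff (R := O) F}) := by rw [hspan0]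
end

section
/- Let O be a complete DVR with uniformizer π and let T be a free O-module of rank 2 with continuous action of a profinite group G such that the semisimplification of T/πT is a direct sum of two characters φ ⊕ ψ over the residue field. Then there exists a G-stable O-lattice T' in V = T ⊗ Frac(O) such that T'/πT' is an extension 0 → F(φ) → T'/πT' → F(ψ) → 0 (i.e., with φ as the sub-representation). -/
variable {O : Type*} [CommRing O] [IsDomain O] [IsDiscreteValuationRing O]
variable {V : Type*} [AddCommGroup V] [Module (FractionRing O) V]
  [Module O V] [IsScalarTower O (FractionRing O) V]
variable {G : Type*} [Group G]

/-- `T/πT` is an extension `0 → F(χ₁) → T/πT → F(χ₂) → 0` of residual representations: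
there are generators `e₁, e₂` of the lattice `T` such that, modulo `πT`,
`g` acts on `e₁` by `χ₁(g)` and on `e₂` by `χ₂(g)` modulo the line spanned by `e₁`. -/
def ResidualExtension (π : O) (ρ : Representation (FractionRing O) G V)
    (T : Submodule O V) (χ₁ χ₂ : G →* (IsLocalRing.ResidueField O)ˣ) : Prop :=
  ∃ e₁ e₂ : V, e₁ ∈ T ∧ e₂ ∈ T ∧ T = Submodule.span O {e₁, e₂} ∧
    (∀ g : G, ∃ c : O, IsLocalRing.residue O c = (χ₁ g : IsLocalRing.ResidueField O) ∧
      ρ g e₁ - c • e₁ ∈ (Ideal.span {π} : Ideal O) • T) ∧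
    (∀ g : G, ∃ c : O, IsLocalRing.residue O c = (χ₂ g : IsLocalRing.ResidueField O) ∧
      ρ g e₂ - c • e₂ ∈ ((Ideal.span {π} : Ideal O) • T ⊔ Submodule.span O {e₁}))

/-- Ribet's lemma, choice of lattice: Let `O` be a complete DVR with
uniformizer `π` and residue field `F`, let `V` be a 2-dimensional representation of a
group `G` over `K = Frac(O)`, and let `T ⊆ V` be a `G`-stable `O`-lattice whose residual
representation `T/πT` has semisimplification `φ ⊕ ψ` (i.e. it is an extension of one of
the two characters by the other), with `φ ≠ ψ`.  Then there exists a `G`-stable `O`-lattice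
`T' ⊆ V` such that `T'/πT'` is an extension `0 → F(φ) → T'/πT' → F(ψ) → 0`, i.e. with `φ`
as the sub-representation. -/
theorem statement16 [IsAdicComplete (IsLocalRing.maximalIdeal O) O]
    (π : O) (hπ : Irreducible π)
    (ρ : Representation (FractionRing O) G V)
    (hdim : Module.finrank (FractionRing O) V = 2)
    (φ ψ : G →* (IsLocalRing.ResidueField O)ˣ) (hne : φ ≠ ψ)
    (T : Submodule O V) (hfg : T.FG)
    (hfull : Submodule.span (FractionRing O) (T : Set V) = ⊤)
    (hstable : ∀ g : G, ∀ x ∈ T, ρ g x ∈ T)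
    (hss : ResidualExtension π ρ T φ ψ ∨ ResidualExtension π ρ T ψ φ) :
    ∃ T' : Submodule O V, T'.FG ∧
      Submodule.span (FractionRing O) (T' : Set V) = ⊤ ∧
      (∀ g : G, ∀ x ∈ T', ρ g x ∈ T') ∧
      ResidualExtension π ρ T' φ ψ := by
  rcases hss with h | h
  · exact ⟨T, hfg, hfull, hstable, h⟩
  obtain ⟨e₁, e₂, he₁, he₂, hT, h₁, h₂⟩ := h
  set K := FractionRing O
  set f : V := π • e₂ with hf
  set T' : Submodule O V := Submodule.span O {f, e₁} with hT'
  have hfT' : f ∈ T' := Submodule.subset_span (by left; rfl)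
  have he₁T' : e₁ ∈ T' := Submodule.subset_span (by right; rfl)
  -- π • T ⊆ T'
  have hπT' : ∀ t ∈ T, π • t ∈ T' := by
    intro t ht
    rw [hT] at ht
    induction ht using Submodule.span_induction with
    | mem x hx =>
      rcases hx with rfl | rfl
      · exact Submodule.smul_mem _ π he₁T'
      · exact hfT'
    | zero => simpa using T'.zero_mem
    | add x y _ _ hx hy => rw [smul_add]; exact T'.add_mem hx hy
    | smul a x _ hx => rw [smul_comm]; exact Submodule.smul_mem _ a hx
  have hIT : (Ideal.span {π} : Ideal O) • T ≤ T' := by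
    refine Submodule.smul_le.2 fun r hr t ht => ?_
    obtain ⟨a, rfl⟩ := Ideal.mem_span_singleton'.mp hr
    rw [mul_smul]
    exact Submodule.smul_mem _ a (hπT' t ht)
  have hTT' : T' ≤ T := by
    rw [hT]
    refine Submodule.span_le.2 ?_
    rintro x (rfl | rfl)
    · exact Submodule.smul_mem _ π (Submodule.subset_span (by right; rfl))
    · exact Submodule.subset_span (by left; rfl)
  have hπ0 : (algebraMap O K) π ≠ 0 := by
    simpa using fun h => hπ.ne_zero ((IsFractionRing.injective O K) (by simpa using h))
  refine ⟨T', ?_, ?_, ?_, f, e₁, hfT', he₁T', rfl, ?_, ?_⟩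
  · exact Submodule.fg_span (Set.toFinite _)
  · -- fullness
    rw [eq_top_iff, ← hfull]
    refine Submodule.span_le.2 fun x hx => ?_
    rw [hT] at hx
    induction hx using Submodule.span_induction with
    | mem x hx =>
      rcases hx with rfl | rfl
      · exact Submodule.subset_span he₁T'
      · have : x = (algebraMap O K π)⁻¹ • f := by
          rw [hf, ← algebraMap_smul K π x, inv_smul_smul₀ hπ0]
        rw [this]
        exact Submodule.smul_mem _ _ (Submodule.subset_span hfT')
    | zero => exact Submodule.zero_mem _
    | add x y _ _ hx hy => exact Submodule.add_mem _ hx hy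
    | smul a x _ hx =>
      rw [← algebraMap_smul K a x]
      exact Submodule.smul_mem _ _ hx
  · -- stability
    intro g x hx
    induction hx using Submodule.span_induction with
    | mem x hx =>
      rcases hx with rfl | rfl
      · have : ρ g f = π • ρ g e₂ := by rw [hf, LinearMap.map_smul_of_tower]
        rw [this]
        exact hπT' _ (hstable g e₂ he₂)
      · obtain ⟨c, _, hm⟩ := h₁ g
        have : ρ g x = c • x + (ρ g x - c • x) := by abel
        rw [this]
        exact T'.add_mem (Submodule.smul_mem _ c he₁T') (hIT hm)
    | zero => simpa using T'.zero_mem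
    | add x y _ _ hx hy => rw [map_add]; exact T'.add_mem hx hy
    | smul a x _ hx =>
      rw [← algebraMap_smul K a x, map_smul, algebraMap_smul]
      exact Submodule.smul_mem _ a hx
  · -- φ is the sub on f = π • e₂
    intro g
    obtain ⟨c, hc, hm⟩ := h₂ g
    refine ⟨c, hc, ?_⟩
    have key : ρ g f - c • f = π • (ρ g e₂ - c • e₂) := by
      rw [hf, LinearMap.map_smul_of_tower, smul_sub, smul_comm c π]
    rw [key]
    obtain ⟨w, hw, y, hy, hwy⟩ := Submodule.mem_sup.mp hm
    obtain ⟨a, rfl⟩ := Submodule.mem_span_singleton.mp hy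
    rw [← hwy, smul_add]
    refine Submodule.add_mem _ ?_ ?_
    · exact Submodule.smul_mem_smul (Ideal.mem_span_singleton_self π) (hIT hw)
    · rw [smul_comm π a]
      exact Submodule.smul_mem _ a
        (Submodule.smul_mem_smul (Ideal.mem_span_singleton_self π) he₁T')
  · -- ψ on e₁ modulo the line spanned by f
    intro g
    obtain ⟨c, hc, hm⟩ := h₁ g
    refine ⟨c, hc, ?_⟩
    have hle : (Ideal.span {π} : Ideal O) • T ≤
        (Ideal.span {π} : Ideal O) • T' ⊔ Submodule.span O {f} := by
      refine Submodule.smul_le.2 fun r hr t ht => ?_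
      obtain ⟨a, rfl⟩ := Ideal.mem_span_singleton'.mp hr
      rw [mul_smul]
      refine Submodule.smul_mem _ a ?_
      rw [hT] at ht
      induction ht using Submodule.span_induction with
      | mem x hx =>
        rcases hx with rfl | rfl
        · exact Submodule.mem_sup_left
            (Submodule.smul_mem_smul (Ideal.mem_span_singleton_self π) he₁T')
        · exact Submodule.mem_sup_right (Submodule.mem_span_singleton_self f)
      | zero => simpa using Submodule.zero_mem _
      | add x y _ _ hx hy => rw [smul_add]; exact Submodule.add_mem _ hx hy
      | smul b x _ hx => rw [smul_comm]; exact Submodule.smul_mem _ b hx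
    exact hle hm
end
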